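/- Let p₁, p₂, p₃ be distinct primes, each congruent to 7 modulo 8, with (−p₁/p₂) = (−p₂/p₃) = (−p₃/p₁) = −1. Then p₁·ε_{2p₁} is a square in the field K⁺ = ℚ(√(2p₁), √(2p₂), √(2p₃)) ⊂ ℝ; that is, the positive real square root √(p₁·ε_{2p₁}) lies in K⁺. -/

import Mathlib

/-- `x` is a unit of the ring of integers of the subfield `K` of `ℝ`. -/
def IsUnitIn (K : IntermediateField ℚ ℝ) (x : ℝ) : Prop :=
  x ∈ K ∧ IsIntegral ℤ x ∧ x ≠ 0 ∧ IsIntegral ℤ x⁻¹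

/-- `ε` is the fundamental unit of `ℚ(√m)`, realized in `ℝ` via the embedding
sending `√m` to the positive square root: the smallest unit `> 1`. -/
def IsFundamentalUnit (m : ℕ) (ε : ℝ) : Prop :=
  IsUnitIn (IntermediateField.adjoin ℚ {Real.sqrt (m : ℝ)}) ε ∧ 1 < ε ∧
    ∀ y : ℝ, IsUnitIn (IntermediateField.adjoin ℚ {Real.sqrt (m : ℝ)}) y → 1 < y → ε ≤ y

/-- `p₁·ε_{2p₁}` is a square in `K⁺ = ℚ(√(2p₁), √(2p₂), √(2p₃))`. -/


lemma nat_sq_of_coprime {m n c : ℕ} (h : Nat.Coprime m n) (e : m * n = c ^ 2) :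
    ∃ s, m = s ^ 2 := by
  apply exists_eq_pow_of_mul_eq_pow (a := m) (b := n) (c := c) _ e
  rw [Nat.isUnit_iff]
  exact h

lemma odd_case_false {p b a : ℕ} (hp : p % 2 = 1) (hb : b % 2 = 1)
    (h : a ^ 2 = 2 * p * b ^ 2 + 1) : False := by
  have h4 : ((a : ZMod 4)) ^ 2 = 2 * (p : ZMod 4) * (b : ZMod 4) ^ 2 + 1 := by
    have := congrArg (fun n : ℕ => (n : ZMod 4)) h
    push_cast at this
    exact this
  have hp4 : p % 4 = 1 ∨ p % 4 = 3 := by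
    have := Nat.mod_mod_of_dvd p (by norm_num : 2 ∣ 4); omega
  have hb4 : b % 4 = 1 ∨ b % 4 = 3 := by
    have := Nat.mod_mod_of_dvd b (by norm_num : 2 ∣ 4); omega
  have hpc : (p : ZMod 4) = 1 ∨ (p : ZMod 4) = 3 := by
    rcases hp4 with h' | h' <;> [left; right] <;>
      · rw [← ZMod.natCast_mod p 4, h']; decide
  have hbc : (b : ZMod 4) = 1 ∨ (b : ZMod 4) = 3 := by
    rcases hb4 with h' | h' <;> [left; right] <;>
      · rw [← ZMod.natCast_mod b 4, h']; decide
  have hsq : ∀ x : ZMod 4, ¬ (x ^ 2 = 3) := by decide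
  rcases hpc with h1 | h1 <;> rcases hbc with h2 | h2 <;>
    rw [h1, h2] at h4 <;> exact hsq _ (by rw [h4]; decide)

lemma core_lemma {p a b : ℕ} (hp : p.Prime) (hodd : p % 2 = 1) (hb : 1 ≤ b)
    (h : a ^ 2 = 2 * p * b ^ 2 + 1) :
    (∃ s t : ℕ, a = p * s ^ 2 + 2 * t ^ 2 ∧ b = 2 * s * t) ∨
    (∃ s t : ℕ, a = s ^ 2 + 2 * p * t ^ 2 ∧ b = 2 * s * t) := by
  have hbeven : b % 2 = 0 := by
    rcases Nat.even_or_odd b with he | ho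
    · exact Nat.even_iff.mp he
    · exact absurd (odd_case_false hodd (Nat.odd_iff.mp ho) h) not_false
  obtain ⟨c, rfl⟩ : ∃ c, b = 2 * c := ⟨b / 2, by omega⟩
  have hc : 1 ≤ c := by omega
  have haodd : a % 2 = 1 := by
    rcases Nat.even_or_odd a with he | ho
    · exfalso
      obtain ⟨k, rfl⟩ := he
      have h1 : (k + k) ^ 2 = 2 * (2 * k ^ 2) := by ring
      have h2 : 2 * p * (2 * c) ^ 2 = 2 * (p * (2 * c) ^ 2) := by ring
      omega
    · exact Nat.odd_iff.mp ho
  obtain ⟨A, rfl⟩ : ∃ A, a = 2 * A + 1 := ⟨a / 2, by omega⟩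
  have key : A * (A + 1) = 2 * p * c ^ 2 := by
    have h1 : (2 * A + 1) ^ 2 = 4 * (A * (A + 1)) + 1 := by ring
    have h2 : 2 * p * (2 * c) ^ 2 = 4 * (2 * p * c ^ 2) := by ring
    omega
  have hppos : 0 < 2 * p := by have := hp.pos; omega
  have hcop : Nat.Coprime A (A + 1) := by
    simpa using Nat.coprime_succ_self A
  have hp2 : p ∣ A ∨ p ∣ (A + 1) := by
    refine (Nat.Prime.dvd_mul hp).mp ?_
    exact ⟨2 * c ^ 2, by rw [key]; ring⟩
  have h2d : 2 ∣ A ∨ 2 ∣ (A + 1) := by omega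
  have hcop2p : Nat.Coprime 2 p :=
    (Nat.coprime_primes Nat.prime_two hp).mpr (by omega)
  have hsq_eq : ∀ {x y : ℕ}, x ^ 2 = y ^ 2 → x = y := fun {x y} hxy =>
    Nat.pow_left_injective (by norm_num) hxy
  rcases hp2 with hpA | hpA1
  · rcases h2d with h2A | h2A1
    · -- 2 ∣ A, p ∣ A : bad case
      obtain ⟨A1, hA1eq⟩ : 2 * p ∣ A := Nat.Coprime.mul_dvd_of_dvd_of_dvd hcop2p h2A hpA
      have e1 : A1 * (A + 1) = c ^ 2 := by
        refine Nat.eq_of_mul_eq_mul_left hppos ?_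
        calc 2 * p * (A1 * (A + 1)) = (2 * p * A1) * (A + 1) := by ring
          _ = A * (A + 1) := by rw [← hA1eq]
          _ = 2 * p * c ^ 2 := key
      have hcop1 : Nat.Coprime A1 (A + 1) :=
        Nat.Coprime.coprime_dvd_left ⟨2 * p, by rw [hA1eq]; ring⟩ hcop
      obtain ⟨t, ht⟩ := nat_sq_of_coprime hcop1 e1
      obtain ⟨s, hs⟩ := nat_sq_of_coprime (Nat.Coprime.symm hcop1) (by rw [mul_comm] at e1; exact e1)
      right
      have e2 : A = 2 * p * t ^ 2 := by rw [hA1eq, ht]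
      have e3 : A + 1 = s ^ 2 := hs
      refine ⟨s, t, by omega, ?_⟩
      have : c ^ 2 = (s * t) ^ 2 := by rw [← e1, ht, hs]; ring
      rw [hsq_eq this]; ring
    · -- p ∣ A, 2 ∣ A + 1 : good case
      obtain ⟨A1, hA1eq⟩ := hpA
      obtain ⟨A2, hA2eq⟩ := h2A1
      have e1 : A1 * A2 = c ^ 2 := by
        refine Nat.eq_of_mul_eq_mul_left hppos ?_
        calc 2 * p * (A1 * A2) = (p * A1) * (2 * A2) := by ring
          _ = A * (A + 1) := by rw [← hA1eq, ← hA2eq]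
          _ = 2 * p * c ^ 2 := key
      have hcop1 : Nat.Coprime A1 A2 :=
        Nat.Coprime.coprime_dvd_left ⟨p, by rw [hA1eq]; ring⟩
          (Nat.Coprime.coprime_dvd_right ⟨2, by rw [hA2eq]; ring⟩ hcop)
      obtain ⟨s, hs⟩ := nat_sq_of_coprime hcop1 e1
      obtain ⟨t, ht⟩ := nat_sq_of_coprime (Nat.Coprime.symm hcop1) (by rw [mul_comm] at e1; exact e1)
      left
      have e2 : A = p * s ^ 2 := by rw [hA1eq, hs]
      have e3 : A + 1 = 2 * t ^ 2 := by rw [hA2eq, ht]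
      refine ⟨s, t, by omega, ?_⟩
      have : c ^ 2 = (s * t) ^ 2 := by rw [← e1, ht, hs]; ring
      rw [hsq_eq this]; ring
  · rcases h2d with h2A | h2A1
    · -- 2 ∣ A, p ∣ A + 1 : good case (roles swapped)
      obtain ⟨A1, hA1eq⟩ := h2A
      obtain ⟨A2, hA2eq⟩ := hpA1
      have e1 : A1 * A2 = c ^ 2 := by
        refine Nat.eq_of_mul_eq_mul_left hppos ?_
        calc 2 * p * (A1 * A2) = (2 * A1) * (p * A2) := by ring
          _ = A * (A + 1) := by rw [← hA1eq, ← hA2eq]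
          _ = 2 * p * c ^ 2 := key
      have hcop1 : Nat.Coprime A1 A2 :=
        Nat.Coprime.coprime_dvd_left ⟨2, by rw [hA1eq]; ring⟩
          (Nat.Coprime.coprime_dvd_right ⟨p, by rw [hA2eq]; ring⟩ hcop)
      obtain ⟨s, hs⟩ := nat_sq_of_coprime hcop1 e1
      obtain ⟨t, ht⟩ := nat_sq_of_coprime (Nat.Coprime.symm hcop1) (by rw [mul_comm] at e1; exact e1)
      left
      have e2 : A = 2 * s ^ 2 := by rw [hA1eq, hs]
      have e3 : A + 1 = p * t ^ 2 := by rw [hA2eq, ht]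
      refine ⟨t, s, by omega, ?_⟩
      have : c ^ 2 = (t * s) ^ 2 := by rw [← e1, hs, ht]; ring
      rw [hsq_eq this]; ring
    · -- 2 ∣ A + 1, p ∣ A + 1 : bad case
      obtain ⟨A2, hA2eq⟩ : 2 * p ∣ (A + 1) :=
        Nat.Coprime.mul_dvd_of_dvd_of_dvd hcop2p h2A1 hpA1
      have e1 : A * A2 = c ^ 2 := by
        refine Nat.eq_of_mul_eq_mul_left hppos ?_
        calc 2 * p * (A * A2) = A * (2 * p * A2) := by ring
          _ = A * (A + 1) := by rw [← hA2eq]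
          _ = 2 * p * c ^ 2 := key
      have hcop1 : Nat.Coprime A A2 :=
        Nat.Coprime.coprime_dvd_right ⟨2 * p, by rw [hA2eq]; ring⟩ hcop
      obtain ⟨s, hs⟩ := nat_sq_of_coprime hcop1 e1
      obtain ⟨t, ht⟩ := nat_sq_of_coprime (Nat.Coprime.symm hcop1) (by rw [mul_comm] at e1; exact e1)
      right
      have e2 : A = s ^ 2 := hs
      have e3 : A + 1 = 2 * p * t ^ 2 := by rw [hA2eq, ht]
      refine ⟨s, t, by omega, ?_⟩
      have : c ^ 2 = (s * t) ^ 2 := by rw [← e1, hs, ht]; ring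
      rw [hsq_eq this]; ring

open Polynomial

lemma sqrt_nat_integral_rat (d : ℕ) : IsIntegral ℚ (Real.sqrt d) := by
  refine ⟨X ^ 2 - C (d : ℚ), monic_X_pow_sub_C _ (by norm_num), ?_⟩
  have hd2 : (Real.sqrt d) ^ 2 = (d : ℝ) := Real.sq_sqrt (Nat.cast_nonneg d)
  simp [hd2]

lemma sqrt_nat_integral_int (d : ℕ) : IsIntegral ℤ (Real.sqrt d) := by
  refine ⟨X ^ 2 - C (d : ℤ), monic_X_pow_sub_C _ (by norm_num), ?_⟩
  have hd2 : (Real.sqrt d) ^ 2 = (d : ℝ) := Real.sq_sqrt (Nat.cast_nonneg d)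
  simp [hd2]

lemma mem_repr {d : ℕ} {x : ℝ}
    (hx : x ∈ IntermediateField.adjoin ℚ {Real.sqrt d}) :
    ∃ q r : ℚ, x = (q : ℝ) + (r : ℝ) * Real.sqrt d := by
  have hd2 : (Real.sqrt d) ^ 2 = (d : ℝ) := Real.sq_sqrt (Nat.cast_nonneg d)
  have h2 : x ∈ Algebra.adjoin ℚ {Real.sqrt d} := by
    rw [← IntermediateField.adjoin_simple_toSubalgebra_of_isAlgebraic (sqrt_nat_integral_rat d).isAlgebraic]
    exact hx
  refine Algebra.adjoin_induction ?_ ?_ ?_ ?_ h2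
  · rintro y hy
    rw [Set.mem_singleton_iff] at hy
    exact ⟨0, 1, by simp [hy]⟩
  · intro r
    exact ⟨r, 0, by simp⟩
  · rintro y z - - ⟨q1, r1, rfl⟩ ⟨q2, r2, rfl⟩
    exact ⟨q1 + q2, r1 + r2, by push_cast; ring⟩
  · rintro y z - - ⟨q1, r1, rfl⟩ ⟨q2, r2, rfl⟩
    refine ⟨q1 * q2 + r1 * r2 * d, q1 * r2 + q2 * r1, ?_⟩
    push_cast
    linear_combination ((r1 : ℝ) * r2) * hd2


lemma denom_of_sf {d : ℕ} (hsf : Squarefree d) {w : ℚ} {z : ℤ}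
    (h : (d : ℚ) * w ^ 2 = (z : ℚ)) : ∃ j : ℤ, w = (j : ℚ) := by
  have hden : w.den = 1 := by
    have hv : (w.den : ℚ) ≠ 0 := by exact_mod_cast w.den_nz
    have hw : (w.num : ℚ) = w * w.den := by
      exact (Rat.mul_den_eq_num w).symm
    have hZ : (d : ℤ) * w.num ^ 2 = z * (w.den : ℤ) ^ 2 := by
      have : (d : ℚ) * w.num ^ 2 = z * (w.den : ℚ) ^ 2 := by
        rw [hw]; ring_nf; ring_nf at h; linear_combination ((w.den : ℚ))^2 * h
      exact_mod_cast this
    have hdvdZ : ((w.den : ℤ)) ^ 2 ∣ (d : ℤ) * w.num ^ 2 := ⟨z, by linarith [hZ]⟩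
    have hdvdN : w.den ^ 2 ∣ d * w.num.natAbs ^ 2 := by
      have := Int.natAbs_dvd_natAbs.mpr hdvdZ
      simpa [Int.natAbs_mul, Int.natAbs_pow] using this
    have hcop : Nat.Coprime (w.den ^ 2) (w.num.natAbs ^ 2) :=
      (Nat.Coprime.pow 2 2 w.reduced.symm)
    have hdvd_d : w.den ^ 2 ∣ d := hcop.dvd_of_dvd_mul_right hdvdN
    have := hsf w.den (by rwa [← sq] )
    simpa [Nat.isUnit_iff] using this
  refine ⟨w.num, ?_⟩
  conv_lhs => rw [← Rat.num_div_den w, hden]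
  simp

lemma coeffs_int {d : ℕ} (hirr : Irrational (Real.sqrt d)) (hd4 : d % 4 = 2)
    (hsf : Squarefree d) {q r : ℚ} (hr : r ≠ 0)
    (hint : IsIntegral ℤ ((q : ℝ) + (r : ℝ) * Real.sqrt d)) :
    ∃ a b : ℤ, q = (a : ℚ) ∧ r = (b : ℚ) := by
  have hd2 : (Real.sqrt d) ^ 2 = (d : ℝ) := Real.sq_sqrt (Nat.cast_nonneg d)
  set x : ℝ := (q : ℝ) + (r : ℝ) * Real.sqrt d with hxdef
  have hxQ : IsIntegral ℚ x := IsIntegral.tower_top hint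
  set P : ℚ[X] := X ^ 2 - C (2 * q) * X + C (q ^ 2 - d * r ^ 2) with hPdef
  have hPmonic : P.Monic := by rw [hPdef]; monicity!
  have hProot : aeval x P = 0 := by
    simp only [hPdef, map_add, map_sub, map_mul, map_pow, aeval_X, aeval_C, eq_ratCast]
    rw [hxdef]
    push_cast
    linear_combination (r : ℝ) ^ 2 * hd2
  have hPdeg : P.natDegree = 2 := by rw [hPdef]; compute_degree!
  have hdvd := minpoly.dvd ℚ x hProot
  have hmmon := minpoly.monic hxQ
  have hmne : minpoly ℚ x ≠ 0 := hmmon.ne_zero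
  have hrR : (r : ℝ) ≠ 0 := by exact_mod_cast hr
  have hnd1 : (minpoly ℚ x).natDegree ≠ 1 := by
    intro h1
    have hdeg : (minpoly ℚ x).degree = 1 := by
      rw [Polynomial.degree_eq_natDegree hmne, h1]; rfl
    obtain ⟨c, hc⟩ := minpoly.degree_eq_one_iff.mp hdeg
    rw [eq_ratCast, hxdef] at hc
    apply hirr
    refine ⟨(c - q) / r, ?_⟩
    push_cast
    field_simp
    linear_combination hc
  have hnd : (minpoly ℚ x).natDegree = 2 := by
    have h2 := Polynomial.natDegree_le_of_dvd hdvd hPmonic.ne_zero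
    rw [hPdeg] at h2
    have h0 := minpoly.natDegree_pos hxQ
    omega
  have hPeq : minpoly ℚ x = P := by
    obtain ⟨u, hu⟩ := hdvd
    have hu0 : u ≠ 0 := by
      rintro rfl; rw [mul_zero] at hu; exact hPmonic.ne_zero hu
    have hmul := Polynomial.natDegree_mul hmne hu0
    rw [← hu, hPdeg, hnd] at hmul
    have hu_deg : u.natDegree = 0 := by omega
    have hcns := Polynomial.eq_C_of_natDegree_eq_zero hu_deg
    have hlc : P.leadingCoeff = (minpoly ℚ x).leadingCoeff * u.leadingCoeff := by
      rw [hu, Polynomial.leadingCoeff_mul]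
    rw [hPmonic.leadingCoeff, hmmon.leadingCoeff, one_mul] at hlc
    have hcc : u.coeff 0 = 1 := by
      rw [hcns] at hlc; simpa using hlc.symm
    rw [hu, hcns, hcc, map_one, mul_one]
  have hmap := minpoly.isIntegrallyClosed_eq_field_fractions' ℚ hint
  set M : ℤ[X] := minpoly ℤ x with hMdef
  have e1 : P.coeff 1 = ((M.coeff 1 : ℤ) : ℚ) := by
    rw [← hPeq, hmap, Polynomial.coeff_map, eq_intCast]
  have e0 : P.coeff 0 = ((M.coeff 0 : ℤ) : ℚ) := by
    rw [← hPeq, hmap, Polynomial.coeff_map, eq_intCast]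
  have hcoeff1 : P.coeff 1 = -(2 * q) := by
    rw [hPdef]
    simp only [Polynomial.coeff_add, Polynomial.coeff_sub, Polynomial.coeff_X_pow,
      Polynomial.coeff_C_mul, Polynomial.coeff_X_one, Polynomial.coeff_C]
    norm_num
  have hcoeff0 : P.coeff 0 = q ^ 2 - d * r ^ 2 := by
    rw [hPdef]
    simp only [Polynomial.coeff_add, Polynomial.coeff_sub, Polynomial.coeff_X_pow,
      Polynomial.coeff_C_mul, Polynomial.coeff_X_zero, Polynomial.coeff_C]
    norm_num
  obtain ⟨k, hk⟩ : ∃ k : ℤ, (k : ℚ) = 2 * q :=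
    ⟨-(M.coeff 1), by push_cast; rw [← e1, hcoeff1]; ring⟩
  obtain ⟨n, hn⟩ : ∃ n : ℤ, (n : ℚ) = q ^ 2 - d * r ^ 2 :=
    ⟨M.coeff 0, by rw [← e0, hcoeff0]⟩
  have hw : (d : ℚ) * (2 * r) ^ 2 = ((k ^ 2 - 4 * n : ℤ) : ℚ) := by
    push_cast
    linear_combination (-(k : ℚ) - 2 * q) * hk + 4 * hn
  obtain ⟨j, hj⟩ := denom_of_sf hsf hw
  have hZ' : k ^ 2 = (d : ℤ) * j ^ 2 + 4 * n := by
    have : (k : ℚ) ^ 2 = (d : ℚ) * (j : ℚ) ^ 2 + 4 * n := by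
      rw [← hj]
      push_cast at hw ⊢
      linarith [hw]
    exact_mod_cast this
  have h24 : (2 : ℕ) ∣ 4 := by norm_num
  have h4 : ((k : ZMod 4)) ^ 2 = 2 * ((j : ZMod 4)) ^ 2 := by
    have hcast := congrArg (fun z : ℤ => (z : ZMod 4)) hZ'
    push_cast at hcast
    have hd' : ((d : ℕ) : ZMod 4) = 2 := by
      rw [← ZMod.natCast_mod d 4, hd4]; rfl
    rw [hd'] at hcast
    have h40 : (4 : ZMod 4) = 0 := rfl
    rw [h40, zero_mul, add_zero] at hcast
    exact hcast
  have main : ∀ x y : ZMod 4, x ^ 2 = 2 * y ^ 2 →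
      ((ZMod.castHom (show (2:ℕ) ∣ 4 by norm_num) (ZMod 2)) x = 0 ∧
        (ZMod.castHom (show (2:ℕ) ∣ 4 by norm_num) (ZMod 2)) y = 0) := by decide
  obtain ⟨hk2, hj2⟩ := main _ _ h4
  rw [map_intCast] at hk2 hj2
  obtain ⟨k', rfl⟩ := (ZMod.intCast_zmod_eq_zero_iff_dvd k 2).mp hk2
  obtain ⟨j', rfl⟩ := (ZMod.intCast_zmod_eq_zero_iff_dvd j 2).mp hj2
  refine ⟨k', j', ?_, ?_⟩
  · push_cast at hk; linarith
  · push_cast at hj; linarith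

lemma rational_not_unit {q : ℚ} (hq : 1 < (q : ℝ)) (h1 : IsIntegral ℤ ((q : ℝ)))
    (h2 : IsIntegral ℤ ((q : ℝ))⁻¹) : False := by
  have hinj : Function.Injective (algebraMap ℚ ℝ) := (algebraMap ℚ ℝ).injective
  have hcast : ∀ s : ℚ, algebraMap ℚ ℝ s = (s : ℝ) := fun s => by
    rw [eq_ratCast]
  have hq0 : q ≠ 0 := by
    intro h; rw [h] at hq; norm_num at hq
  have i1 : IsIntegral ℤ q := by
    rw [← isIntegral_algebraMap_iff hinj (x := q)]
    rwa [hcast]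
  have i2 : IsIntegral ℤ q⁻¹ := by
    rw [← isIntegral_algebraMap_iff hinj (x := q⁻¹)]
    rw [hcast]
    push_cast
    exact h2
  obtain ⟨z, hz⟩ := IsIntegrallyClosed.isIntegral_iff.mp i1
  obtain ⟨w, hw⟩ := IsIntegrallyClosed.isIntegral_iff.mp i2
  rw [eq_intCast] at hz hw
  have hzw : z * w = 1 := by
    have : ((z * w : ℤ) : ℚ) = 1 := by push_cast; rw [hz, hw]; field_simp
    exact_mod_cast this
  have hz2 : 1 < z := by
    have : (1 : ℝ) < ((z : ℚ) : ℝ) := by rw [hz]; exact hq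
    exact_mod_cast this
  rcases Int.eq_one_or_neg_one_of_mul_eq_one' hzw with ⟨h, -⟩ | ⟨h, -⟩ <;> omega

lemma unit_structure {p : ℕ} (hp : p.Prime) (hodd : p % 2 = 1) {ε : ℝ}
    (hmem : ε ∈ IntermediateField.adjoin ℚ {Real.sqrt ((2 * p : ℕ) : ℝ)})
    (hint : IsIntegral ℤ ε) (hinv : IsIntegral ℤ ε⁻¹) (hε : 1 < ε) :
    ∃ a b : ℤ, 0 < a ∧ 0 < b ∧ ε = (a : ℝ) + (b : ℝ) * Real.sqrt ((2 * p : ℕ) : ℝ) ∧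
      (a ^ 2 - 2 * p * b ^ 2 = 1 ∨ a ^ 2 - 2 * p * b ^ 2 = -1) := by
  set d : ℕ := 2 * p with hddef
  have hp2 := hp.two_le
  have hsf : Squarefree d :=
    (Nat.squarefree_mul ((Nat.coprime_primes Nat.prime_two hp).mpr (by omega))).mpr
      ⟨Nat.prime_two.squarefree, hp.squarefree⟩
  have hd4 : d % 4 = 2 := by rw [hddef]; omega
  have hdpos : 0 < d := by rw [hddef]; omega
  have hirr : Irrational (Real.sqrt d) := by
    rw [irrational_sqrt_natCast_iff]
    intro ⟨k, hk⟩
    have := hsf k (by rw [hk])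
    rw [Nat.isUnit_iff] at this
    rw [this] at hk
    rw [hddef] at hk
    omega
  have hd2 : (Real.sqrt d) ^ 2 = (d : ℝ) := Real.sq_sqrt (Nat.cast_nonneg d)
  have hdR : (0 : ℝ) < Real.sqrt d := Real.sqrt_pos.mpr (by exact_mod_cast hdpos)
  have hεne : ε ≠ 0 := by intro h; rw [h] at hε; norm_num at hε
  obtain ⟨q, r, hqr⟩ := mem_repr hmem
  by_cases hr : r = 0
  · exfalso
    rw [hr] at hqr
    have hqr' : ε = (q : ℝ) := by rw [hqr]; push_cast; ring
    exact rational_not_unit (hqr' ▸ hε) (hqr' ▸ hint) (hqr' ▸ hinv)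
  · obtain ⟨a, b, ha, hb⟩ := coeffs_int hirr hd4 hsf hr (hqr ▸ hint)
    rw [ha, hb] at hqr
    have hbne : b ≠ 0 := by
      intro h; rw [h] at hb; exact hr (by exact_mod_cast hb)
    -- the conjugate and the norm
    have hconj : ε * ((a : ℝ) - (b : ℝ) * Real.sqrt d) = ((a ^ 2 - d * b ^ 2 : ℤ) : ℝ) := by
      rw [hqr]; push_cast
      linear_combination (-(b : ℝ) ^ 2) * hd2
    set N : ℤ := a ^ 2 - d * b ^ 2 with hNdef
    have hNne : N ≠ 0 := by
      intro h0
      rw [h0] at hconj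
      push_cast at hconj
      rcases mul_eq_zero.mp hconj with h | h
      · exact hεne h
      · apply hirr
        refine ⟨(a : ℚ) / (b : ℚ), ?_⟩
        have hbR : ((b : ℚ) : ℝ) ≠ 0 := by exact_mod_cast hbne
        push_cast
        push_cast at hbR
        field_simp
        linarith [h]
    have hNRne : ((N : ℤ) : ℝ) ≠ 0 := by exact_mod_cast hNne
    have hNQne : ((N : ℤ) : ℚ) ≠ 0 := by exact_mod_cast hNne
    have hinveq : ε⁻¹ = (((a : ℚ) / (N : ℚ) : ℚ) : ℝ) +
        (((-b : ℚ) / (N : ℚ) : ℚ) : ℝ) * Real.sqrt d := by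
      have expand : (((a : ℚ) / (N : ℚ) : ℚ) : ℝ) + (((-b : ℚ) / (N : ℚ) : ℚ) : ℝ) * Real.sqrt d
          = ((a : ℝ) - (b : ℝ) * Real.sqrt d) / ((N : ℤ) : ℝ) := by
        push_cast; ring
      have h1 : ε * ((((a : ℚ) / (N : ℚ) : ℚ) : ℝ) +
          (((-b : ℚ) / (N : ℚ) : ℚ) : ℝ) * Real.sqrt d) = 1 := by
        rw [expand, ← mul_div_assoc, hconj, div_self hNRne]
      exact inv_eq_of_mul_eq_one_right h1
    have hr' : (-b : ℚ) / (N : ℚ) ≠ 0 := by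
      apply div_ne_zero _ hNQne
      simpa using hbne
    obtain ⟨a', b', ha', hb'⟩ := coeffs_int hirr hd4 hsf hr' (hinveq ▸ hinv)
    have haZ : a = a' * N := by
      have := (div_eq_iff hNQne).mp ha'
      exact_mod_cast this
    have hbZ : b = -(b' * N) := by
      have := (div_eq_iff hNQne).mp hb'
      have : (-b : ℚ) = (b' * N : ℚ) := by exact_mod_cast this
      have h2 : (b : ℚ) = ((-(b' * N) : ℤ) : ℚ) := by push_cast; linarith [this]
      exact_mod_cast h2
    have hNcancel : N * 1 = N * (N * (a' ^ 2 - (d : ℤ) * b' ^ 2)) := by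
      have hN2 : N = a ^ 2 - (d : ℤ) * b ^ 2 := hNdef
      rw [mul_one]
      conv_lhs => rw [hN2, haZ, hbZ]
      ring
    have hNpm : N = 1 ∨ N = -1 := by
      have h1' : (1 : ℤ) = N * (a' ^ 2 - (d : ℤ) * b' ^ 2) := mul_left_cancel₀ hNne hNcancel
      rcases Int.eq_one_or_neg_one_of_mul_eq_one' h1'.symm with ⟨h, -⟩ | ⟨h, -⟩
      · exact Or.inl h
      · exact Or.inr h
    -- positivity of a and b
    have hNabs : |((N : ℤ) : ℝ)| = 1 := by
      rcases hNpm with h | h <;> rw [h] <;> norm_num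
    have hεpos : (0 : ℝ) < ε := by linarith
    have hconjR : (a : ℝ) - (b : ℝ) * Real.sqrt d = ((N : ℤ) : ℝ) / ε := by
      rw [← hconj]; field_simp
    have habs : |(a : ℝ) - (b : ℝ) * Real.sqrt d| < 1 := by
      rw [hconjR, abs_div, hNabs, abs_of_pos hεpos, div_lt_one hεpos]
      exact hε
    have habs' := abs_lt.mp habs
    have h2a : ε + ((a : ℝ) - (b : ℝ) * Real.sqrt d) = 2 * (a : ℝ) := by rw [hqr]; push_cast; ring
    have h2b : ε - ((a : ℝ) - (b : ℝ) * Real.sqrt d) = 2 * ((b : ℝ) * Real.sqrt d) := by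
      rw [hqr]; push_cast; ring
    have haPos : 0 < a := by
      have : (0 : ℝ) < (a : ℝ) := by nlinarith [habs'.1, habs'.2]
      exact_mod_cast this
    have hbPos : 0 < b := by
      have hbsd : (0 : ℝ) < (b : ℝ) * Real.sqrt d := by nlinarith [habs'.1, habs'.2]
      have : (0 : ℝ) < (b : ℝ) := by
        rcases mul_pos_iff.mp hbsd with ⟨h1, -⟩ | ⟨-, h2⟩
        · exact h1
        · linarith
      exact_mod_cast this
    refine ⟨a, b, haPos, hbPos, ?_, ?_⟩
    · rw [hqr]; push_cast; ring
    · have hdz : (d : ℤ) = 2 * (p : ℤ) := by push_cast [hddef]; ring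
      rcases hNpm with h | h
      · left; rw [← hdz]; rw [hNdef] at h; omega
      · right; rw [← hdz]; rw [hNdef] at h; omega

theorem stmt_18 (p₁ p₂ p₃ : ℕ)
    [hp₁ : Fact p₁.Prime] [hp₂ : Fact p₂.Prime] [hp₃ : Fact p₃.Prime]
    (hd₁₂ : p₁ ≠ p₂) (hd₁₃ : p₁ ≠ p₃) (hd₂₃ : p₂ ≠ p₃)
    (hc₁ : p₁ % 8 = 7) (hc₂ : p₂ % 8 = 7) (hc₃ : p₃ % 8 = 7)
    (h₁ : legendreSym p₂ (-(p₁ : ℤ)) = -1)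
    (h₂ : legendreSym p₃ (-(p₂ : ℤ)) = -1)
    (h₃ : legendreSym p₁ (-(p₃ : ℤ)) = -1)
    (ε₂₁ : ℝ) (hε₂₁ : IsFundamentalUnit (2 * p₁) ε₂₁) :
    Real.sqrt ((p₁ : ℝ) * ε₂₁) ∈ IntermediateField.adjoin ℚ
      ({Real.sqrt (2 * (p₁ : ℝ)), Real.sqrt (2 * (p₂ : ℝ)),
        Real.sqrt (2 * (p₃ : ℝ))} : Set ℝ) := by
  obtain ⟨⟨hmem, hint, hne, hinv⟩, hgt, hmin⟩ := hε₂₁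
  have hp := hp₁.out
  have hp2 := hp.two_le
  have hodd : p₁ % 2 = 1 := by omega
  have hsqeq : Real.sqrt ((2 * p₁ : ℕ) : ℝ) = Real.sqrt (2 * (p₁ : ℝ)) := by
    congr 1; push_cast; ring
  have hd2' : (Real.sqrt (2 * (p₁ : ℝ))) ^ 2 = 2 * (p₁ : ℝ) :=
    Real.sq_sqrt (by positivity)
  obtain ⟨a, b, haPos, hbPos, hεeq, hnorm⟩ := unit_structure hp hodd hmem hint hinv hgt
  rw [hsqeq] at hεeq hmem hmin
  -- rule out norm -1 using p₁ ≡ 3 (mod 4)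
  have hnorm1 : a ^ 2 - 2 * p₁ * b ^ 2 = 1 := by
    rcases hnorm with h | h
    · exact h
    · exfalso
      have hsq : ((a : ZMod p₁)) ^ 2 = -1 := by
        have hc := congrArg (fun z : ℤ => (z : ZMod p₁)) h
        push_cast at hc
        rw [ZMod.natCast_self] at hc
        rw [← hc]; ring
      have h4 : p₁ % 4 = 3 := by
        have := Nat.mod_mod_of_dvd p₁ (by norm_num : 4 ∣ 8); omega
      exact (ZMod.exists_sq_eq_neg_one_iff.mp ⟨(a : ZMod p₁), by rw [← hsq]; ring⟩) h4
  obtain ⟨A, rfl⟩ : ∃ A : ℕ, a = (A : ℤ) := ⟨a.toNat, (Int.toNat_of_nonneg haPos.le).symm⟩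
  obtain ⟨B, rfl⟩ : ∃ B : ℕ, b = (B : ℤ) := ⟨b.toNat, (Int.toNat_of_nonneg hbPos.le).symm⟩
  have hAB : A ^ 2 = 2 * p₁ * B ^ 2 + 1 := by
    have h' : ((A : ℤ)) ^ 2 = 2 * (p₁ : ℤ) * (B : ℤ) ^ 2 + 1 := by linarith [hnorm1]
    exact_mod_cast h'
  have hB1 : 1 ≤ B := by
    have : (0 : ℤ) < B := hbPos
    exact_mod_cast this
  have hnatmem : ∀ (K : IntermediateField ℚ ℝ) (n : ℕ), ((n : ℝ)) ∈ K := fun K n => by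
    exact_mod_cast SubfieldClass.ratCast_mem K (n : ℚ)
  have hnatint : ∀ n : ℕ, IsIntegral ℤ ((n : ℝ)) := fun n => by
    have := isIntegral_algebraMap (R := ℤ) (A := ℝ) (x := (n : ℤ))
    rwa [eq_intCast, Int.cast_natCast] at this
  have hsint : IsIntegral ℤ (Real.sqrt (2 * (p₁ : ℝ))) := by
    rw [← hsqeq]; exact sqrt_nat_integral_int (2 * p₁)
  rcases core_lemma hp hodd hB1 hAB with ⟨s, t, hA, hB⟩ | ⟨s, t, hA, hB⟩
  · -- good case : p₁ ε is the square of p₁ s + t √(2 p₁)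
    have key : (p₁ : ℝ) * ε₂₁ =
        ((p₁ : ℝ) * (s : ℝ) + (t : ℝ) * Real.sqrt (2 * (p₁ : ℝ))) ^ 2 := by
      rw [hεeq]
      push_cast [hA, hB]
      linear_combination (-(t : ℝ) ^ 2) * hd2'
    have hpos : (0 : ℝ) ≤ (p₁ : ℝ) * (s : ℝ) + (t : ℝ) * Real.sqrt (2 * (p₁ : ℝ)) := by
      positivity
    rw [key, Real.sqrt_sq hpos]
    have hsqmem : Real.sqrt (2 * (p₁ : ℝ)) ∈ IntermediateField.adjoin ℚ
        ({Real.sqrt (2 * (p₁ : ℝ)), Real.sqrt (2 * (p₂ : ℝ)),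
          Real.sqrt (2 * (p₃ : ℝ))} : Set ℝ) :=
      IntermediateField.subset_adjoin ℚ _ (by left; rfl)
    exact add_mem (mul_mem (hnatmem _ p₁) (hnatmem _ s)) (mul_mem (hnatmem _ t) hsqmem)
  · -- bad case : ε would be the square of a smaller unit, contradiction
    exfalso
    have hs1 : 1 ≤ s := by
      rcases Nat.eq_zero_or_pos s with rfl | h
      · simp at hB; omega
      · exact h
    have ht1 : 1 ≤ t := by
      rcases Nat.eq_zero_or_pos t with rfl | h
      · simp at hB; omega
      · exact h
    have hηsq : ((s : ℝ) + (t : ℝ) * Real.sqrt (2 * (p₁ : ℝ))) ^ 2 = ε₂₁ := by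
      rw [hεeq]
      push_cast [hA, hB]
      linear_combination (t : ℝ) ^ 2 * hd2'
    have hα1 : (1 : ℝ) ≤ Real.sqrt (2 * (p₁ : ℝ)) := by
      rw [show (1 : ℝ) = Real.sqrt 1 from (Real.sqrt_one).symm]
      apply Real.sqrt_le_sqrt
      have : (1 : ℝ) ≤ (p₁ : ℝ) := by exact_mod_cast (by omega : 1 ≤ p₁)
      linarith
    have hη1 : 1 < (s : ℝ) + (t : ℝ) * Real.sqrt (2 * (p₁ : ℝ)) := by
      have hs' : (1 : ℝ) ≤ (s : ℝ) := by exact_mod_cast hs1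
      have ht' : (1 : ℝ) ≤ (t : ℝ) := by exact_mod_cast ht1
      nlinarith
    have hηmem : (s : ℝ) + (t : ℝ) * Real.sqrt (2 * (p₁ : ℝ)) ∈
        IntermediateField.adjoin ℚ {Real.sqrt (2 * (p₁ : ℝ))} :=
      add_mem (hnatmem _ s) (mul_mem (hnatmem _ t)
        (IntermediateField.subset_adjoin ℚ _ rfl))
    have hηint : IsIntegral ℤ ((s : ℝ) + (t : ℝ) * Real.sqrt (2 * (p₁ : ℝ))) :=
      (hnatint s).add ((hnatint t).mul hsint)
    have hmulc : ((s : ℝ) + (t : ℝ) * Real.sqrt (2 * (p₁ : ℝ))) *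
        ((s : ℝ) - (t : ℝ) * Real.sqrt (2 * (p₁ : ℝ)))
        = (((s : ℤ) ^ 2 - 2 * (p₁ : ℤ) * (t : ℤ) ^ 2 : ℤ) : ℝ) := by
      push_cast
      linear_combination (-(t : ℝ) ^ 2) * hd2'
    have hN'sq : ((s : ℤ) ^ 2 - 2 * (p₁ : ℤ) * (t : ℤ) ^ 2) *
        ((s : ℤ) ^ 2 - 2 * (p₁ : ℤ) * (t : ℤ) ^ 2) = 1 := by
      have e1 : ((A : ℤ)) = (s : ℤ) ^ 2 + 2 * (p₁ : ℤ) * (t : ℤ) ^ 2 := by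
        push_cast [hA]; ring
      have e2 : ((B : ℤ)) = 2 * (s : ℤ) * (t : ℤ) := by push_cast [hB]; ring
      have hthis : ((A : ℤ)) ^ 2 - 2 * (p₁ : ℤ) * ((B : ℤ)) ^ 2 = 1 := hnorm1
      rw [e1, e2] at hthis
      linear_combination hthis
    have hηinv : IsIntegral ℤ ((s : ℝ) + (t : ℝ) * Real.sqrt (2 * (p₁ : ℝ)))⁻¹ := by
      rcases Int.eq_one_or_neg_one_of_mul_eq_one' hN'sq with ⟨hcase, -⟩ | ⟨hcase, -⟩
      · have h1 : ((s : ℝ) + (t : ℝ) * Real.sqrt (2 * (p₁ : ℝ))) *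
            ((s : ℝ) - (t : ℝ) * Real.sqrt (2 * (p₁ : ℝ))) = 1 := by
          rw [hmulc, hcase]; norm_num
        rw [inv_eq_of_mul_eq_one_right h1]
        exact (hnatint s).sub ((hnatint t).mul hsint)
      · have h1 : ((s : ℝ) + (t : ℝ) * Real.sqrt (2 * (p₁ : ℝ))) *
            ((t : ℝ) * Real.sqrt (2 * (p₁ : ℝ)) - (s : ℝ)) = 1 := by
          have h2 : ((s : ℝ) + (t : ℝ) * Real.sqrt (2 * (p₁ : ℝ))) *
              ((s : ℝ) - (t : ℝ) * Real.sqrt (2 * (p₁ : ℝ))) = -1 := by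
            rw [hmulc, hcase]; norm_num
          linear_combination -h2
        rw [inv_eq_of_mul_eq_one_right h1]
        exact ((hnatint t).mul hsint).sub (hnatint s)
    have hle := hmin ((s : ℝ) + (t : ℝ) * Real.sqrt (2 * (p₁ : ℝ)))
      ⟨hηmem, hηint, by positivity, hηinv⟩ hη1
    nlinarith [hηsq, hη1, hle]
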